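/- Let A be a coherent integral domain, M a finitely presented A-module, and G a finitely presented reflexive A-module. Then Hom_A(M, G) is a reflexive A-module. In particular, the dual M^∨ of any finitely presented A-module is reflexive. -/

import Mathlib

open CategoryTheory

/-- A ring is *coherent* if every finitely generated ideal is finitely presented. -/
def IsCoherentRing (A : Type) [CommRing A] : Prop :=
  ∀ I : Ideal A, I.FG → Module.FinitePresentation A I

section Aux

variable {A : Type} [CommRing A]

/-- Factor a linear map through a surjection. -/
lemma factor_thru {N P W : Type} [AddCommGroup N] [Module A N] [AddCommGroup P] [Module A P]
    [AddCommGroup W] [Module A W] (π : N →ₗ[A] P) (hπ : Function.Surjective π) (g : N →ₗ[A] W)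
    (h : LinearMap.ker π ≤ LinearMap.ker g) : ∃ f : P →ₗ[A] W, f.comp π = g := by
  refine ⟨((LinearMap.ker π).liftQ g h).comp (π.quotKerEquivOfSurjective hπ).symm.toLinearMap, ?_⟩
  ext x
  have hx : (π.quotKerEquivOfSurjective hπ).symm (π x) = Submodule.Quotient.mk x := by
    apply (π.quotKerEquivOfSurjective hπ).injective
    rw [LinearEquiv.apply_symm_apply]
    rfl
  simp [hx]

variable [IsDomain A]

/-- Torsion extension of functionals, along a list of generators. -/
lemma torsion_extend_aux {F : Type} [AddCommGroup F] [Module A F] (l : List F) :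
    ∀ (K : Type) (_ : AddCommGroup K) (_ : Module A K) (ι : K →ₗ[A] F) (f : K →ₗ[A] A),
      (∀ k, ι k = 0 → f k = 0) →
      Submodule.span A {x | x ∈ l} ⊔ LinearMap.range ι = ⊤ →
      ∃ a : A, a ≠ 0 ∧ ∃ g : F →ₗ[A] A, g.comp ι = a • f := by
  induction l with
  | nil =>
    intro K _ _ ι f hker hspan
    have hsurj : Function.Surjective ι := by
      rw [← LinearMap.range_eq_top]
      simpa using hspan
    obtain ⟨g, hg⟩ := factor_thru ι hsurj f (fun k hk => hker k hk)
    exact ⟨1, one_ne_zero, g, by rw [hg, one_smul]⟩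
  | cons x l ih =>
    intro K _ _ ι f hker hspan
    -- the new inclusion from `K × A`, `(k, a) ↦ ι k + a • x`
    set ι' : (K × A) →ₗ[A] F := LinearMap.coprod ι (LinearMap.toSpanSingleton A F x) with hι'
    have hι'app : ∀ (k : K) (a : A), ι' (k, a) = ι k + a • x := by
      intro k a; simp [hι', LinearMap.toSpanSingleton_apply]
    have hspan' : Submodule.span A {y | y ∈ l} ⊔ LinearMap.range ι' = ⊤ := by
      rw [← top_le_iff, ← hspan]
      intro z hz
      have hsub : Submodule.span A {y | y ∈ x :: l} ⊔ LinearMap.range ι ≤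
          Submodule.span A {y | y ∈ l} ⊔ LinearMap.range ι' := by
        apply sup_le
        · have : ({y | y ∈ x :: l} : Set F) = {x} ∪ {y | y ∈ l} := by
            ext y; simp [or_comm]
          rw [this, Submodule.span_union]
          apply sup_le
          · rw [Submodule.span_singleton_le_iff_mem]
            exact Submodule.mem_sup_right ⟨(0, 1), by simp [hι'app]⟩
          · exact le_sup_left
        · refine le_trans ?_ le_sup_right
          rintro w ⟨k, rfl⟩
          exact ⟨(k, 0), by simp [hι'app]⟩
      exact hsub hz
    by_cases h : ∃ c : A, c ≠ 0 ∧ ∃ kx : K, ι kx = c • x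
    · obtain ⟨c, hc, kx, hkx⟩ := h
      set f' : (K × A) →ₗ[A] A :=
        LinearMap.coprod (c • f) (LinearMap.toSpanSingleton A A (f kx)) with hf'
      have hf'app : ∀ (k : K) (a : A), f' (k, a) = c * f k + a * f kx := by
        intro k a; simp [hf', LinearMap.toSpanSingleton_apply, mul_comm, smul_eq_mul]
      have hker' : ∀ p : K × A, ι' p = 0 → f' p = 0 := by
        rintro ⟨k, a⟩ hp
        rw [hι'app] at hp
        have : ι (c • k + a • kx) = 0 := by
          rw [map_add, map_smul, map_smul, hkx, smul_comm a c x, ← smul_add, hp, smul_zero]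
        have h0 := hker _ this
        rw [map_add, map_smul, map_smul, smul_eq_mul, smul_eq_mul] at h0
        rw [hf'app]
        exact h0
      obtain ⟨a2, ha2, g, hg⟩ := ih (K × A) _ _ ι' f' hker' hspan'
      refine ⟨a2 * c, mul_ne_zero ha2 hc, g, ?_⟩
      ext k
      have := LinearMap.congr_fun hg (k, 0)
      simp only [LinearMap.comp_apply, hι'app, hf'app, LinearMap.smul_apply, smul_eq_mul,
        zero_smul, add_zero, zero_mul] at this ⊢
      rw [this]; ring
    · set f' : (K × A) →ₗ[A] A := f.comp (LinearMap.fst A K A) with hf'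
      have hker' : ∀ p : K × A, ι' p = 0 → f' p = 0 := by
        rintro ⟨k, a⟩ hp
        rw [hι'app] at hp
        have ha : a = 0 := by
          by_contra ha
          exact h ⟨a, ha, -k, by rw [map_neg, neg_eq_iff_add_eq_zero, hp]⟩
        rw [ha, zero_smul, add_zero] at hp
        simpa [hf'] using hker k hp
      obtain ⟨a2, ha2, g, hg⟩ := ih (K × A) _ _ ι' f' hker' hspan'
      refine ⟨a2, ha2, g, ?_⟩
      ext k
      have := LinearMap.congr_fun hg (k, 0)
      simpa [hι'app, hf'] using this
    
/-- Torsion extension of functionals from a submodule-like `K` of a finite module. -/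
lemma torsion_extend {K F : Type} [AddCommGroup K] [Module A K] [AddCommGroup F] [Module A F]
    [Module.Finite A F] (ι : K →ₗ[A] F) (hι : Function.Injective ι) (f : K →ₗ[A] A) :
    ∃ a : A, a ≠ 0 ∧ ∃ g : F →ₗ[A] A, g.comp ι = a • f := by
  obtain ⟨s, hs⟩ := Module.Finite.fg_top (R := A) (M := F)
  apply torsion_extend_aux s.toList K _ _ ι f
  · intro k hk
    have : k = 0 := hι (by simpa using hk)
    simp [this]
  · rw [← top_le_iff]
    have : Submodule.span A {x | x ∈ s.toList} = ⊤ := by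
      rw [← hs]; congr 1; ext y; simp
    rw [this]; exact le_sup_left

/-- The kernel of a map between a finite reflexive module and a torsionless module is
reflexive. -/
lemma reflexive_of_exact {K F F1 : Type} [AddCommGroup K] [Module A K]
    [AddCommGroup F] [Module A F] [Module.Finite A F] [Module.IsReflexive A F]
    [AddCommGroup F1] [Module A F1]
    (hF1 : Function.Injective (Module.Dual.eval A F1))
    (ι : K →ₗ[A] F) (ρ : F →ₗ[A] F1) (hι : Function.Injective ι)
    (hexact : LinearMap.ker ρ = LinearMap.range ι) :
    Function.Bijective (Module.Dual.eval A K) := by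
  have hρι : ρ.comp ι = 0 := by
    ext k
    have : ι k ∈ LinearMap.ker ρ := by rw [hexact]; exact ⟨k, rfl⟩
    simpa using this
  constructor
  · intro x y hxy
    apply hι
    apply (Module.bijective_dual_eval A F).injective
    ext g
    have := LinearMap.congr_fun hxy (g.comp ι)
    simpa [Module.Dual.eval_apply] using this
  · intro ξ
    obtain ⟨y, hy⟩ := (Module.bijective_dual_eval A F).surjective (ι.dualMap.dualMap ξ)
    have hρy : ρ y = 0 := by
      apply hF1
      rw [map_zero]
      ext g
      have h1 : (Module.Dual.eval A F1) (ρ y) g = (Module.Dual.eval A F y) (g.comp ρ) := rfl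
      rw [h1, hy]
      have h2 : ι.dualMap.dualMap ξ (g.comp ρ) = ξ ((g.comp ρ).comp ι) := rfl
      rw [h2, LinearMap.comp_assoc, hρι, LinearMap.comp_zero]
      simp
    have hmem : y ∈ LinearMap.range ι := by rw [← hexact]; exact hρy
    obtain ⟨x, hx⟩ := hmem
    refine ⟨x, ?_⟩
    ext f
    obtain ⟨a, ha, g, hg⟩ := torsion_extend ι hι f
    have h1 : g (ι x) = a * f x := by
      have := LinearMap.congr_fun hg x
      simpa using this
    have h2 : g y = ξ (g.comp ι) := by
      have := LinearMap.congr_fun hy g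
      exact this
    rw [hg] at h2
    have h3 : ξ (a • f) = a * ξ f := by simp
    rw [h3, ← hx, h1] at h2
    have h4 : f x = ξ f := mul_left_cancel₀ ha h2
    simpa [Module.Dual.eval_apply] using h4

/-- `Fin n → G` is reflexive when `G` is. -/
lemma pi_reflexive {G : Type} [AddCommGroup G] [Module A G] [Module.IsReflexive A G] (n : ℕ) :
    Module.IsReflexive A (Fin n → G) := by
  induction n with
  | zero =>
    constructor
    constructor
    · intro a b _
      exact Subsingleton.elim a b
    · intro ξ
      exact ⟨0, Subsingleton.elim _ _⟩
  | succ n ih =>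
    letI := ih
    have e : (G × (Fin n → G)) ≃ₗ[A] (Fin (n + 1) → G) :=
      { (Fin.consEquiv (fun _ : Fin (n + 1) => G)) with
        map_add' := fun p q => by
          funext i
          refine Fin.cases ?_ ?_ i <;> simp [Fin.consEquiv]
        map_smul' := fun c p => by
          funext i
          refine Fin.cases ?_ ?_ i <;> simp [Fin.consEquiv] }
    exact Module.equiv e

end Aux

/-- Over a coherent domain, if `G` is a finitely presented reflexive module and `M` is
finitely presented, then `Hom_A(M, G)` is reflexive. -/
theorem stmt_3 (A : Type) [CommRing A] [IsDomain A] (hA : IsCoherentRing A)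
    (M G : Type) [AddCommGroup M] [Module A M] [AddCommGroup G] [Module A G]
    [Module.FinitePresentation A M] [Module.FinitePresentation A G]
    (hG : Function.Bijective (Module.Dual.eval A G)) :
    Function.Bijective (Module.Dual.eval A (M →ₗ[A] G)) := by
  haveI hGrefl : Module.IsReflexive A G := ⟨hG⟩
  obtain ⟨n, π, hπ⟩ := Module.Finite.exists_fin' A M
  have hker : (LinearMap.ker π).FG := Module.FinitePresentation.fg_ker π hπ
  obtain ⟨m, v, hv⟩ := Submodule.fg_iff_exists_fin_generating_family.mp hker
  set κ : (Fin m → A) →ₗ[A] (Fin n → A) := Fintype.linearCombination A v with hκ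
  have hrangeκ : LinearMap.range κ = LinearMap.ker π := by
    rw [hκ, Fintype.range_linearCombination, hv]
  set ι : (M →ₗ[A] G) →ₗ[A] ((Fin n → A) →ₗ[A] G) := LinearMap.lcomp A G π with hιdef
  set ρ : ((Fin n → A) →ₗ[A] G) →ₗ[A] ((Fin m → A) →ₗ[A] G) := LinearMap.lcomp A G κ with hρdef
  -- instances on F := (Fin n → A) →ₗ[A] G
  letI : Module.Finite A ((Fin n → A) →ₗ[A] G) :=
    Module.Finite.equiv (LinearEquiv.piRing A G (Fin n) A).symm
  letI : Module.IsReflexive A (Fin n → G) := pi_reflexive n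
  letI : Module.IsReflexive A ((Fin n → A) →ₗ[A] G) :=
    Module.equiv (LinearEquiv.piRing A G (Fin n) A).symm
  letI : Module.IsReflexive A (Fin m → G) := pi_reflexive m
  letI : Module.IsReflexive A ((Fin m → A) →ₗ[A] G) :=
    Module.equiv (LinearEquiv.piRing A G (Fin m) A).symm
  have hι : Function.Injective ι := by
    intro a b hab
    ext z
    obtain ⟨w, rfl⟩ := hπ z
    exact LinearMap.congr_fun hab w
  have hexact : LinearMap.ker ρ = LinearMap.range ι := by
    ext h
    constructor
    · intro hh
      have hh' : h.comp κ = 0 := hh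
      have hle : LinearMap.ker π ≤ LinearMap.ker h := by
        rw [← hrangeκ]
        rintro z ⟨w, rfl⟩
        exact LinearMap.congr_fun hh' w
      obtain ⟨f, hf⟩ := factor_thru π hπ h hle
      exact ⟨f, hf⟩
    · rintro ⟨f, rfl⟩
      have : (f.comp π).comp κ = 0 := by
        rw [LinearMap.comp_assoc]
        have hπκ : π.comp κ = 0 := LinearMap.ext fun w => by
          have : κ w ∈ LinearMap.ker π := by rw [← hrangeκ]; exact ⟨w, rfl⟩
          simpa using this
        rw [hπκ, LinearMap.comp_zero]
      exact this
  exact reflexive_of_exact (Module.bijective_dual_eval A ((Fin m → A) →ₗ[A] G)).injective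
    ι ρ hι hexact
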